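/- Let 0→h→ĝ→g→0 be a non-abelian extension with section s and non-abelian 3-cocycle (ω,θ,ρ). A pair (α,β)∈Aut(g)×Aut(h) is inducible if and only if the non-abelian 3-cocycles (ω,θ,ρ) and (ω_{(α,β)},θ_{(α,β)},ρ_{(α,β)}) are equivalent. -/
import Mathlib


universe u v w

/-- A Lie triple system over a field `k`. -/
structure LTS (k : Type u) (V : Type v) [Field k] [AddCommGroup V] [Module k V] where
  t : V →ₗ[k] V →ₗ[k] V →ₗ[k] V
  alt : ∀ x y, t x x y = 0
  cyc : ∀ x y z, t x y z + t y z x + t z x y = 0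
  leib : ∀ a b x y z, t a b (t x y z) =
    t (t a b x) y z + t x (t a b y) z + t x y (t a b z)

/-- `D_θ(x,y) a = θ(y,x) a - θ(x,y) a`. -/
def Dmap {G H : Type*} [AddCommGroup H] (θ : G → G → H → H) (x y : G) (a : H) : H :=
  θ y x a - θ x y a

/-- `D_ρ(x)(a,b) = ρ(x)(b,a) - ρ(x)(a,b)`. -/
def Drho {G H : Type*} [AddCommGroup H] (ρ : G → H → H → H) (x : G) (a b : H) : H :=
  ρ x b a - ρ x a b

/-- A non-abelian 3-cocycle on `g` with values in `h`: identities (3.2)–(3.14) of the paper,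
together with the wedge conditions on `ω`, `θ`, `ρ`. -/
def IsNACocycle {G H : Type*} [AddCommGroup H]
    (tg : G → G → G → G) (th : H → H → H → H)
    (ω : G → G → G → H) (θ : G → G → H → H) (ρ : G → H → H → H) : Prop :=
  (∀ x y, ω x x y = 0) ∧
  (∀ x a, θ x x a = 0) ∧
  (∀ x a, ρ x a a = 0) ∧
  (∀ x y z, ω x y z + ω y z x + ω z x y = 0) ∧
  (∀ x1 x2 y1 y2 y3,
    Dmap θ x1 x2 (ω y1 y2 y3) + ω x1 x2 (tg y1 y2 y3) =
      ω (tg x1 x2 y1) y2 y3 + θ y2 y3 (ω x1 x2 y1)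
      + ω y1 (tg x1 x2 y2) y3 - θ y1 y3 (ω x1 x2 y2)
      + ω y1 y2 (tg x1 x2 y3) + Dmap θ y1 y2 (ω x1 x2 y3)) ∧
  (∀ x y z w a,
    Dmap θ x y (θ z w a) - θ z w (Dmap θ x y a) =
      θ (tg x y z) w a + θ z (tg x y w) a
      - Drho ρ w (ω x y z) a - ρ z a (ω x y w)) ∧
  (∀ x y z w a,
    θ x (tg y z w) a - ρ x a (ω y z w) =
      θ z w (θ x y a) - θ y w (θ x z a) + Dmap θ y z (θ x w a)) ∧
  (∀ x y z a b,
    Dmap θ x y (ρ z a b) =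
      ρ z (Dmap θ x y a) b + ρ (tg x y z) a b + th (ω x y z) a b
      + ρ z a (Dmap θ x y b)) ∧
  (∀ x y z a b,
    Dmap θ y z (ρ x a b) =
      ρ x a (Dmap θ y z b) - ρ z (θ x y a) b + ρ y (θ x z a) b) ∧
  (∀ x y z a b,
    θ y z (ρ x a b) =
      ρ x a (θ y z b) - Drho ρ z (θ x y a) b - ρ y b (θ x z a)) ∧
  (∀ x y a b c,
    Dmap θ x y (th a b c) =
      th (Dmap θ x y a) b c + th a (Dmap θ x y b) c + th a b (Dmap θ x y c)) ∧
  (∀ x y a b c,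
    ρ x a (ρ y b c) =
      ρ y (ρ x a b) c + ρ y b (ρ x a c) - th (θ x y a) b c) ∧
  (∀ x y a b c,
    th a b (θ x y c) =
      θ x y (th a b c) - Drho ρ y (Drho ρ x a b) c - ρ x c (Drho ρ y a b)) ∧
  (∀ x a b c d,
    th a b (ρ x c d) =
      ρ x (th a b c) d - th c (Drho ρ x a b) d + ρ x c (th a b d)) ∧
  (∀ x a b c d,
    ρ x a (th b c d) =
      th (ρ x a b) c d + th b (ρ x a c) d + th b c (ρ x a d))

/-- The bracket `[x+a, y+b, z+c]_{(ω,θ,ρ)}` on `g ⊕ h`. -/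
def nabBr {G H : Type*} [AddCommGroup H]
    (tg : G → G → G → G) (th : H → H → H → H)
    (ω : G → G → G → H) (θ : G → G → H → H) (ρ : G → H → H → H) :
    G × H → G × H → G × H → G × H :=
  fun p q r =>
    (tg p.1 q.1 r.1,
      ω p.1 q.1 r.1 + Dmap θ p.1 q.1 r.2 + θ q.1 r.1 p.2 - θ p.1 r.1 q.2
        + Drho ρ r.1 p.2 q.2 + ρ p.1 q.2 r.2 - ρ q.1 p.2 r.2 + th p.2 q.2 r.2)

/-- Equivalence of two non-abelian 3-cocycles via `φ : g → h`
(equations (3.15)–(3.17) of the paper). -/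
def CocycleEquiv {G H : Type*} [AddCommGroup H]
    (tg : G → G → G → G) (th : H → H → H → H)
    (ω1 : G → G → G → H) (θ1 : G → G → H → H) (ρ1 : G → H → H → H)
    (ω2 : G → G → G → H) (θ2 : G → G → H → H) (ρ2 : G → H → H → H)
    (φ : G → H) : Prop :=
  (∀ x y z,
    ω1 x y z - ω2 x y z =
      θ2 x z (φ y) - Dmap θ2 x y (φ z) + ρ2 x (φ y) (φ z) - θ2 y z (φ x)
        + Drho ρ2 z (φ x) (φ y) - ρ2 y (φ x) (φ z)
        - th (φ x) (φ y) (φ z) + φ (tg x y z)) ∧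
  (∀ x y a,
    θ1 x y a - θ2 x y a =
      ρ2 x a (φ y) - Drho ρ2 y a (φ x) + th a (φ x) (φ y)) ∧
  (∀ x a b, ρ1 x a b - ρ2 x a b = th a (φ x) b)

/-- The operation `i_f(g)` on degree-one cochains (from equations (4.2)–(4.4)). -/
def ibrack {M : Type*} [AddCommGroup M] (f g : M → M → M → M) :
    M → M → M → M → M → M :=
  fun x1 y1 x2 y2 z =>
    f (g x1 y1 x2) y2 z + f x2 (g x1 y1 y2) z
      - (f x1 y1 (g x2 y2 z) - f x2 y2 (g x1 y1 z))

/-- The graded bracket `[f,g]_{Lts} = (-1)^{1·1} i_f(g) - i_g(f)` of two degree-one cochains. -/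
def brLts {M : Type*} [AddCommGroup M] (f g : M → M → M → M) :
    M → M → M → M → M → M :=
  fun x1 y1 x2 y2 z =>
    -(ibrack f g x1 y1 x2 y2 z) - ibrack g f x1 y1 x2 y2 z

/-- Non-abelian 1-cocycles on `g` with values in `h`. -/
def IsZ1 {G H : Type*} [AddCommGroup H]
    (tg : G → G → G → G) (th : H → H → H → H)
    (θ : G → G → H → H) (ρ : G → H → H → H) (φ : G → H) : Prop :=
  (∀ x a b, th a (φ x) b = 0) ∧
  (∀ x y a, th a (φ x) (φ y) - Drho ρ y a (φ x) + ρ x a (φ y) = 0) ∧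
  (∀ x y z,
    Drho ρ z (φ x) (φ y) - ρ y (φ x) (φ z) - θ y z (φ x)
      + ρ x (φ y) (φ z) + θ x z (φ y) - Dmap θ x y (φ z)
      = th (φ x) (φ y) (φ z) - φ (tg x y z))

set_option maxHeartbeats 1600000

section LTSHelpers

variable {k E : Type*} [Field k] [AddCommGroup E] [Module k E]

theorem lts_skew (L : LTS k E) (x y z : E) : L.t x y z = - L.t y x z := by
  have h := L.alt (x + y) z
  simp only [map_add, LinearMap.add_apply, L.alt, zero_add, add_zero] at h
  exact eq_neg_of_add_eq_zero_right h

theorem lts_swap23 (L : LTS k E) (x y z : E) : L.t x y z = L.t x z y - L.t y z x := by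
  have h := L.cyc x y z
  have h2 := lts_skew L z x y
  apply eq_of_sub_eq_zero
  rw [h2] at h
  rw [← h]
  abel

end LTSHelpers

/-- a pair `(α,β) ∈ Aut(g) × Aut(h)` is inducible if and only if the
non-abelian 3-cocycles `(ω_{(α,β)}, θ_{(α,β)}, ρ_{(α,β)})` and `(ω,θ,ρ)` are equivalent. -/
theorem statement16 {k G H E : Type*} [Field k] [AddCommGroup G] [Module k G]
    [AddCommGroup H] [Module k H] [AddCommGroup E] [Module k E]
    (Lg : LTS k G) (Lh : LTS k H) (LE : LTS k E)
    (i : H →ₗ[k] E) (p : E →ₗ[k] G)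
    (ihom : ∀ a b c, i (Lh.t a b c) = LE.t (i a) (i b) (i c))
    (phom : ∀ x y z, p (LE.t x y z) = Lg.t (p x) (p y) (p z))
    (iinj : Function.Injective i) (psurj : Function.Surjective p)
    (hexact : LinearMap.range i = LinearMap.ker p)
    (s : G →ₗ[k] E) (hs : ∀ x, p (s x) = x)
    (ω : G → G → G → H) (θ : G → G → H → H) (ρ : G → H → H → H)
    (hω : ∀ x y z, i (ω x y z) = LE.t (s x) (s y) (s z) - s (Lg.t x y z))
    (hθ : ∀ x y a, i (θ x y a) = LE.t (i a) (s x) (s y))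
    (hρ : ∀ x a b, i (ρ x a b) = LE.t (s x) (i a) (i b))
    (α : G ≃ₗ[k] G) (β : H ≃ₗ[k] H)
    (αhom : ∀ x y z, α (Lg.t x y z) = Lg.t (α x) (α y) (α z))
    (βhom : ∀ a b c, β (Lh.t a b c) = Lh.t (β a) (β b) (β c)) :
    (∃ γ : E ≃ₗ[k] E,
      (∀ x y z, γ (LE.t x y z) = LE.t (γ x) (γ y) (γ z)) ∧
      (∀ a, γ (i a) = i (β a)) ∧
      (∀ x, p (γ (s x)) = α x)) ↔
    (∃ φ : G →ₗ[k] H,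
      CocycleEquiv (fun x y z => Lg.t x y z) (fun a b c => Lh.t a b c)
        (fun x y z => β (ω (α.symm x) (α.symm y) (α.symm z)))
        (fun x y a => β (θ (α.symm x) (α.symm y) (β.symm a)))
        (fun x a b => β (ρ (α.symm x) (β.symm a) (β.symm b)))
        ω θ ρ (fun x => φ x)) := by
  classical
  -- p ∘ i = 0
  have hpi : ∀ a, p (i a) = 0 := by
    intro a
    have h : i a ∈ LinearMap.ker p := hexact ▸ LinearMap.mem_range_self i a
    exact h
  -- the retraction r : E →ₗ[k] H
  have hqmem : ∀ e : E, ((LinearMap.id : E →ₗ[k] E) - s ∘ₗ p) e ∈ LinearMap.range i := by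
    intro e
    rw [hexact]
    simp [LinearMap.sub_apply, hs]
  set r : E →ₗ[k] H :=
    (LinearEquiv.ofInjective i iinj).symm.toLinearMap ∘ₗ
      LinearMap.codRestrict (LinearMap.range i) ((LinearMap.id : E →ₗ[k] E) - s ∘ₗ p) hqmem with hrdef
  have hir : ∀ e, i (r e) = e - s (p e) := by
    intro e
    have h1 : ((LinearEquiv.ofInjective i iinj) (r e) : E) = i (r e) :=
      LinearEquiv.ofInjective_apply i (r e)
    rw [← h1, hrdef]
    simp [LinearMap.codRestrict_apply, LinearMap.sub_apply, LinearEquiv.apply_symm_apply]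
  have hri : ∀ a, r (i a) = a := by
    intro a
    apply iinj
    rw [hir]
    simp [hpi]
  have hrs : ∀ x, r (s x) = 0 := by
    intro x
    apply iinj
    rw [hir, hs]
    simp
  have decomp : ∀ e, e = s (p e) + i (r e) := by
    intro e
    rw [hir]
    abel
  -- additivity / negation lemmas for θ and ρ
  have θsub : ∀ x y a b, θ x y (a - b) = θ x y a - θ x y b := by
    intro x y a b
    apply iinj
    simp only [hθ, map_sub, LinearMap.sub_apply]
  have θneg : ∀ x y a, θ x y (-a) = - θ x y a := by
    intro x y a
    apply iinj
    simp only [hθ, map_neg, LinearMap.neg_apply]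
  have ρsub₁ : ∀ x a b c, ρ x (a - b) c = ρ x a c - ρ x b c := by
    intro x a b c
    apply iinj
    simp only [hρ, map_sub, LinearMap.sub_apply]
  have ρsub₂ : ∀ x a b c, ρ x a (b - c) = ρ x a b - ρ x a c := by
    intro x a b c
    apply iinj
    simp only [hρ, map_sub, LinearMap.sub_apply]
  have ρneg₁ : ∀ x a b, ρ x (-a) b = - ρ x a b := by
    intro x a b
    apply iinj
    simp only [hρ, map_neg, LinearMap.neg_apply]
  have ρneg₂ : ∀ x a b, ρ x a (-b) = - ρ x a b := by
    intro x a b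
    apply iinj
    simp only [hρ, map_neg, LinearMap.neg_apply]
  -- product formulas for the mixed brackets
  have P2 : ∀ x y c, LE.t (s x) (s y) (i c) = i (Dmap θ x y c) := by
    intro x y c
    rw [Dmap, map_sub, hθ, hθ, lts_swap23 LE (s x) (s y) (i c),
      lts_skew LE (s y) (i c) (s x), lts_skew LE (s x) (i c) (s y)]
    abel
  have P3 : ∀ x b z, LE.t (s x) (i b) (s z) = - i (θ x z b) := by
    intro x b z
    rw [lts_skew LE (s x) (i b) (s z), hθ]
  have P6 : ∀ a y c, LE.t (i a) (s y) (i c) = - i (ρ y a c) := by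
    intro a y c
    rw [lts_skew LE (i a) (s y) (i c), hρ]
  have P7 : ∀ a b z, LE.t (i a) (i b) (s z) = i (Drho ρ z a b) := by
    intro a b z
    rw [Drho, map_sub, hρ, hρ]
    rw [lts_swap23 LE (i a) (i b) (s z), lts_skew LE (i b) (s z) (i a),
      lts_skew LE (i a) (s z) (i b)]
    abel
  have P1 : ∀ x y z, LE.t (s x) (s y) (s z) = s (Lg.t x y z) + i (ω x y z) := by
    intro x y z
    rw [hω]
    abel
  -- the key bracket expansion formula
  have brE : ∀ x y z a b c, LE.t (s x + i a) (s y + i b) (s z + i c) =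
      s (Lg.t x y z) + i (ω x y z + Dmap θ x y c + θ y z a - θ x z b
        + Drho ρ z a b + ρ x b c - ρ y a c + Lh.t a b c) := by
    intro x y z a b c
    simp only [map_add, LinearMap.add_apply]
    rw [P1, P2, P3 x b z, (hθ y z a).symm, (hρ x b c).symm, P6 a y c, P7 a b z,
      (ihom a b c).symm]
    simp only [map_add, map_sub]
    abel
  constructor
  · rintro ⟨γ, γhom, γi, γps⟩
    set ψ : G →ₗ[k] H := r ∘ₗ (γ : E →ₗ[k] E) ∘ₗ s with hψdef
    have hψx : ∀ x, ψ x = r (γ (s x)) := fun x => rfl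
    have hγs : ∀ x, γ (s x) = s (α x) + i (ψ x) := by
      intro x
      have h := decomp (γ (s x))
      rw [γps x] at h
      rw [h, hψx]
    refine ⟨-(ψ ∘ₗ (α.symm : G →ₗ[k] G)), ?_, ?_, ?_⟩
    · -- equation (3.15)
      intro x y z
      have htg : α.symm (Lg.t x y z) = Lg.t (α.symm x) (α.symm y) (α.symm z) := by
        rw [LinearEquiv.symm_apply_eq, αhom, α.apply_symm_apply, α.apply_symm_apply,
          α.apply_symm_apply]
      have h1 : γ (LE.t (s (α.symm x)) (s (α.symm y)) (s (α.symm z)))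
          = s (Lg.t x y z) + i (ψ (Lg.t (α.symm x) (α.symm y) (α.symm z))
              + β (ω (α.symm x) (α.symm y) (α.symm z))) := by
        rw [P1, map_add, γi, hγs, αhom, α.apply_symm_apply, α.apply_symm_apply,
          α.apply_symm_apply, map_add]
        abel
      have h2 : γ (LE.t (s (α.symm x)) (s (α.symm y)) (s (α.symm z)))
          = s (Lg.t x y z) + i (ω x y z + Dmap θ x y (ψ (α.symm z))
              + θ y z (ψ (α.symm x)) - θ x z (ψ (α.symm y))
              + Drho ρ z (ψ (α.symm x)) (ψ (α.symm y))
              + ρ x (ψ (α.symm y)) (ψ (α.symm z)) - ρ y (ψ (α.symm x)) (ψ (α.symm z))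
              + Lh.t (ψ (α.symm x)) (ψ (α.symm y)) (ψ (α.symm z))) := by
        rw [γhom, hγs, hγs, hγs, α.apply_symm_apply, α.apply_symm_apply,
          α.apply_symm_apply, brE]
      have key3 := iinj (add_left_cancel (h1.symm.trans h2))
      have key3' : β (ω (α.symm x) (α.symm y) (α.symm z))
          = (ω x y z + Dmap θ x y (ψ (α.symm z))
              + θ y z (ψ (α.symm x)) - θ x z (ψ (α.symm y))
              + Drho ρ z (ψ (α.symm x)) (ψ (α.symm y))
              + ρ x (ψ (α.symm y)) (ψ (α.symm z)) - ρ y (ψ (α.symm x)) (ψ (α.symm z))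
              + Lh.t (ψ (α.symm x)) (ψ (α.symm y)) (ψ (α.symm z)))
            - ψ (Lg.t (α.symm x) (α.symm y) (α.symm z)) := eq_sub_of_add_eq' key3
      simp only [LinearMap.neg_apply, LinearMap.coe_comp, Function.comp_apply,
        LinearEquiv.coe_coe, key3', htg, Dmap, Drho, θneg, ρneg₁, ρneg₂, map_neg,
        LinearMap.neg_apply, neg_neg]
      abel
    · -- equation (3.16)
      intro x y a
      have key2 : β (θ (α.symm x) (α.symm y) (β.symm a))
          = θ x y a - ρ x a (ψ (α.symm y)) + Drho ρ y a (ψ (α.symm x))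
            + Lh.t a (ψ (α.symm x)) (ψ (α.symm y)) := by
        apply iinj
        rw [← γi, hθ, γhom, γi, hγs, hγs, α.apply_symm_apply, α.apply_symm_apply,
          β.apply_symm_apply]
        simp only [map_add, map_sub, LinearMap.add_apply]
        rw [hθ x y a, hρ x a (ψ (α.symm y)), ← P7 a (ψ (α.symm x)) y, ihom,
          lts_skew LE (i a) (s x) (i (ψ (α.symm y)))]
        abel
      simp only [LinearMap.neg_apply, LinearMap.coe_comp, Function.comp_apply,
        LinearEquiv.coe_coe, key2, Drho, θneg, ρneg₁, ρneg₂, map_neg,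
        LinearMap.neg_apply, neg_neg]
      abel
    · -- equation (3.17)
      intro x a b
      have key : β (ρ (α.symm x) (β.symm a) (β.symm b))
          = ρ x a b + Lh.t (ψ (α.symm x)) a b := by
        apply iinj
        rw [← γi, hρ, γhom, γi, γi, hγs, α.apply_symm_apply, β.apply_symm_apply,
          β.apply_symm_apply]
        simp only [map_add, LinearMap.add_apply]
        rw [hρ, ihom]
      simp only [LinearMap.neg_apply, LinearMap.coe_comp, Function.comp_apply,
        LinearEquiv.coe_coe, key]
      rw [lts_skew Lh (ψ (α.symm x)) a b]
      simp only [map_neg, LinearMap.neg_apply, neg_neg]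
      abel
  · rintro ⟨φm, e315, e316, e317⟩
    have thsub₁ : ∀ a b c d : H, Lh.t (a - b) c d = Lh.t a c d - Lh.t b c d := by
      intros; simp [map_sub, LinearMap.sub_apply]
    have thsub₂ : ∀ a b c d : H, Lh.t a (b - c) d = Lh.t a b d - Lh.t a c d := by
      intros; simp [map_sub, LinearMap.sub_apply]
    have thsub₃ : ∀ a b c d : H, Lh.t a b (c - d) = Lh.t a b c - Lh.t a b d := by
      intros; simp [map_sub]
    have thexp : ∀ a b c d e f : H, Lh.t (a - b) (c - d) (e - f)
        = Lh.t a c e - Lh.t a c f - Lh.t a d e + Lh.t a d f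
          - Lh.t b c e + Lh.t b c f + Lh.t b d e - Lh.t b d f := by
      intros
      simp only [map_sub, LinearMap.sub_apply]
      abel
    have E317 : ∀ x a b, β (ρ x a b)
        = Lh.t (β a) (φm (α x)) (β b) + ρ (α x) (β a) (β b) := by
      intro x a b
      have h := e317 (α x) (β a) (β b)
      simp only [LinearEquiv.symm_apply_apply] at h
      exact sub_eq_iff_eq_add.mp h
    have E316 : ∀ x y a, β (θ x y a)
        = (ρ (α x) (β a) (φm (α y)) - Drho ρ (α y) (β a) (φm (α x))
            + Lh.t (β a) (φm (α x)) (φm (α y))) + θ (α x) (α y) (β a) := by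
      intro x y a
      have h := e316 (α x) (α y) (β a)
      simp only [LinearEquiv.symm_apply_apply] at h
      exact sub_eq_iff_eq_add.mp h
    have E315 : ∀ x y z, β (ω x y z)
        = (θ (α x) (α z) (φm (α y)) - Dmap θ (α x) (α y) (φm (α z))
            + ρ (α x) (φm (α y)) (φm (α z)) - θ (α y) (α z) (φm (α x))
            + Drho ρ (α z) (φm (α x)) (φm (α y)) - ρ (α y) (φm (α x)) (φm (α z))
            - Lh.t (φm (α x)) (φm (α y)) (φm (α z))
            + φm (Lg.t (α x) (α y) (α z))) + ω (α x) (α y) (α z) := by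
      intro x y z
      have h := e315 (α x) (α y) (α z)
      simp only [LinearEquiv.symm_apply_apply] at h
      exact sub_eq_iff_eq_add.mp h
    have keyH : ∀ x1 x2 x3 a1 a2 a3,
        β (ω x1 x2 x3 + Dmap θ x1 x2 a3 + θ x2 x3 a1 - θ x1 x3 a2
            + Drho ρ x3 a1 a2 + ρ x1 a2 a3 - ρ x2 a1 a3 + Lh.t a1 a2 a3)
          - φm (Lg.t (α x1) (α x2) (α x3))
        = ω (α x1) (α x2) (α x3) + Dmap θ (α x1) (α x2) (β a3 - φm (α x3))
            + θ (α x2) (α x3) (β a1 - φm (α x1))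
            - θ (α x1) (α x3) (β a2 - φm (α x2))
            + Drho ρ (α x3) (β a1 - φm (α x1)) (β a2 - φm (α x2))
            + ρ (α x1) (β a2 - φm (α x2)) (β a3 - φm (α x3))
            - ρ (α x2) (β a1 - φm (α x1)) (β a3 - φm (α x3))
            + Lh.t (β a1 - φm (α x1)) (β a2 - φm (α x2)) (β a3 - φm (α x3)) := by
      intro x1 x2 x3 a1 a2 a3
      have βadd : ∀ a b : H, β (a + b) = β a + β b := fun a b => map_add β a b
      have βsub : ∀ a b : H, β (a - b) = β a - β b := fun a b => map_sub β a b
      simp only [Dmap, Drho, βadd, βsub]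
      simp only [E315, E316, E317, βhom]
      simp only [Dmap, Drho]
      simp only [thexp, θsub, ρsub₁, ρsub₂, thsub₁, thsub₂, thsub₃]
      rw [show Lh.t (φm (α x1)) (β a2) (φm (α x3))
            = -Lh.t (β a2) (φm (α x1)) (φm (α x3)) from lts_skew Lh _ _ _,
        show Lh.t (φm (α x1)) (β a2) (β a3)
            = -Lh.t (β a2) (φm (α x1)) (β a3) from lts_skew Lh _ _ _,
        show Lh.t (β a1) (β a2) (φm (α x3))
            = Lh.t (β a1) (φm (α x3)) (β a2) - Lh.t (β a2) (φm (α x3)) (β a1) from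
          lts_swap23 Lh _ _ _,
        show Lh.t (φm (α x1)) (φm (α x2)) (β a3)
            = Lh.t (β a3) (φm (α x2)) (φm (α x1)) - Lh.t (β a3) (φm (α x1)) (φm (α x2)) from by
          rw [lts_swap23 Lh (φm (α x1)) (φm (α x2)) (β a3),
            lts_skew Lh (φm (α x1)) (β a3) (φm (α x2)),
            lts_skew Lh (φm (α x2)) (β a3) (φm (α x1))]
          abel]
      abel
    set γf : E →ₗ[k] E :=
      s ∘ₗ (α : G →ₗ[k] G) ∘ₗ p
        + i ∘ₗ ((β : H →ₗ[k] H) ∘ₗ r - φm ∘ₗ (α : G →ₗ[k] G) ∘ₗ p) with hγf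
    set γb : E →ₗ[k] E :=
      s ∘ₗ (α.symm : G →ₗ[k] G) ∘ₗ p
        + i ∘ₗ (β.symm : H →ₗ[k] H) ∘ₗ (r + φm ∘ₗ p) with hγb
    have hγfe : ∀ e, γf e = s (α (p e)) + i (β (r e) - φm (α (p e))) := fun e => rfl
    have hγbe : ∀ e, γb e = s (α.symm (p e)) + i (β.symm (r e + φm (p e))) := fun e => rfl
    have hpγf : ∀ e, p (γf e) = α (p e) := by
      intro e; rw [hγfe]; simp [map_add, hs, hpi]
    have hrγf : ∀ e, r (γf e) = β (r e) - φm (α (p e)) := by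
      intro e; rw [hγfe]; simp [map_add, hrs, hri]
    have hpγb : ∀ e, p (γb e) = α.symm (p e) := by
      intro e; rw [hγbe]; simp [map_add, hs, hpi]
    have hrγb : ∀ e, r (γb e) = β.symm (r e + φm (p e)) := by
      intro e; rw [hγbe]; simp [map_add, hrs, hri]
    have hfb : ∀ e, γf (γb e) = e := by
      intro e
      rw [hγfe (γb e), hpγb, hrγb, α.apply_symm_apply, β.apply_symm_apply,
        add_sub_cancel_right]
      exact (decomp e).symm
    have hbf : ∀ e, γb (γf e) = e := by
      intro e
      rw [hγbe (γf e), hpγf, hrγf, α.symm_apply_apply, sub_add_cancel,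
        β.symm_apply_apply]
      exact (decomp e).symm
    refine ⟨LinearEquiv.ofLinear γf γb
      (by ext e; simp only [LinearMap.comp_apply, LinearMap.id_apply]; exact hfb e)
      (by ext e; simp only [LinearMap.comp_apply, LinearMap.id_apply]; exact hbf e),
      ?_, ?_, ?_⟩
    · -- homomorphism property
      intro u v w
      simp only [LinearEquiv.ofLinear_apply]
      have γsi : ∀ X C, γf (s X + i C) = s (α X) + i (β C - φm (α X)) := by
        intro X C
        rw [hγfe]
        simp [map_add, hs, hpi, hrs, hri]
      rw [decomp u, decomp v, decomp w,
        brE (p u) (p v) (p w) (r u) (r v) (r w), γsi, γsi, γsi, γsi,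
        brE, αhom]
      congr 1
      apply congrArg i
      exact keyH (p u) (p v) (p w) (r u) (r v) (r w)
    · intro a
      simp only [LinearEquiv.ofLinear_apply]
      rw [hγfe, hpi, hri]
      simp [map_zero]
    · intro x
      simp only [LinearEquiv.ofLinear_apply]
      rw [hpγf, hs]
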